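/- Let α, β ∈ End P_n. Then ker(α) = ker(β) if and only if Inv(α) = Inv(β). -/

import Mathlib

/-- `α` is a weak endomorphism of the path `P_n` (with vertices `0,…,n-1` standing for
`1,…,n`): `|iα - (i+1)α| ≤ 1` for all consecutive pairs of vertices. -/
def IsWEndo {n : ℕ} (f : Function.End (Fin n)) : Prop :=
  ∀ i : ℕ, ∀ h : i + 1 < n,
    |(((f ⟨i, by omega⟩ : Fin n) : ℕ) : ℤ) - (((f ⟨i + 1, h⟩ : Fin n) : ℕ) : ℤ)| ≤ 1

/-- `α` is an endomorphism of the path `P_n`: `|iα - (i+1)α| = 1` for all consecutive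
pairs of vertices. -/
def IsEndo {n : ℕ} (f : Function.End (Fin n)) : Prop :=
  ∀ i : ℕ, ∀ h : i + 1 < n,
    |(((f ⟨i, by omega⟩ : Fin n) : ℕ) : ℤ) - (((f ⟨i + 1, h⟩ : Fin n) : ℕ) : ℤ)| = 1

/-- The set of inversions of `α`: indices `i ∈ {2,…,n-1}` (in `0`-indexed form
`i ∈ {1,…,n-2}`) with `(i-1)α = (i+1)α ≠ iα`. -/
def InvSet {n : ℕ} (f : Function.End (Fin n)) : Set ℕ :=
  {i | ∃ (h1 : 1 ≤ i) (h2 : i + 1 < n),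
    f ⟨i - 1, by omega⟩ = f ⟨i + 1, h2⟩ ∧ f ⟨i + 1, h2⟩ ≠ f ⟨i, by omega⟩}

/-- The signed step of `f` from vertex `i` to vertex `i+1` (junk value `1` out of range). -/
def stepD {n : ℕ} (f : Function.End (Fin n)) (i : ℕ) : ℤ :=
  if h : i + 1 < n then
    ((f ⟨i + 1, h⟩).val : ℤ) - ((f ⟨i, Nat.lt_of_succ_lt h⟩).val : ℤ)
  else 1

lemma endo_step {n : ℕ} {f : Function.End (Fin n)} (hf : IsEndo f)
    (i : ℕ) (h : i + 1 < n) (h' : i < n) :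
    ((f ⟨i + 1, h⟩).val : ℤ) - ((f ⟨i, h'⟩).val : ℤ) = 1 ∨
    ((f ⟨i + 1, h⟩).val : ℤ) - ((f ⟨i, h'⟩).val : ℤ) = -1 := by
  have h1 : |((f ⟨i, h'⟩).val : ℤ) - ((f ⟨i + 1, h⟩).val : ℤ)| = 1 := hf i h
  rcases abs_cases (((f ⟨i, h'⟩).val : ℤ) - ((f ⟨i + 1, h⟩).val : ℤ)) with ⟨he, _⟩ | ⟨he, _⟩ <;>
    omega

lemma endo_ne {n : ℕ} {f : Function.End (Fin n)} (hf : IsEndo f)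
    (i : ℕ) (h : i + 1 < n) (h' : i < n) :
    f ⟨i + 1, h⟩ ≠ f ⟨i, h'⟩ := by
  intro hc
  have h1 : |((f ⟨i, h'⟩).val : ℤ) - ((f ⟨i + 1, h⟩).val : ℤ)| = 1 := hf i h
  rw [hc] at h1
  simp at h1

lemma stepD_pm {n : ℕ} {f : Function.End (Fin n)} (hf : IsEndo f) (i : ℕ) :
    stepD f i = 1 ∨ stepD f i = -1 := by
  by_cases h : i + 1 < n
  · rw [show stepD f i = _ from dif_pos h]
    exact endo_step hf i h _
  · left; exact dif_neg h

lemma stepD_inv_iff {n : ℕ} {f : Function.End (Fin n)} (hf : IsEndo f) {i : ℕ}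
    (h1 : 1 ≤ i) (h2 : i + 1 < n) :
    i ∈ InvSet f ↔ stepD f (i - 1) + stepD f i = 0 := by
  have hi1 : i - 1 + 1 < n := by omega
  have e1 : stepD f (i - 1) =
      ((f ⟨i - 1 + 1, hi1⟩).val : ℤ) - ((f ⟨i - 1, Nat.lt_of_succ_lt hi1⟩).val : ℤ) :=
    dif_pos hi1
  have e2 : stepD f i =
      ((f ⟨i + 1, h2⟩).val : ℤ) - ((f ⟨i, Nat.lt_of_succ_lt h2⟩).val : ℤ) :=
    dif_pos h2
  have hmk : (⟨i - 1 + 1, hi1⟩ : Fin n) = ⟨i, Nat.lt_of_succ_lt h2⟩ := by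
    apply Fin.ext; simp; omega
  rw [e1, e2, hmk]
  constructor
  · intro hmem
    obtain ⟨ha, hb, hq, hr⟩ := hmem
    have heq' : ((f ⟨i - 1, Nat.lt_of_succ_lt hi1⟩).val : ℤ) = ((f ⟨i + 1, h2⟩).val : ℤ) :=
      congrArg (fun z : Fin n => ((z.val : ℕ) : ℤ)) hq
    omega
  · intro hsum
    have heq' : ((f ⟨i - 1, Nat.lt_of_succ_lt hi1⟩).val : ℤ) = ((f ⟨i + 1, h2⟩).val : ℤ) := by
      omega
    have heq : f ⟨i - 1, Nat.lt_of_succ_lt hi1⟩ = f ⟨i + 1, h2⟩ := by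
      apply Fin.val_injective
      exact_mod_cast heq'
    exact ⟨h1, h2, heq, endo_ne hf i h2 _⟩

lemma key {n : ℕ} (f g : Function.End (Fin n)) (hf : IsEndo f) (hg : IsEndo g)
    (hinv : InvSet f = InvSet g) {x y : Fin n} (hfe : f x = f y) : g x = g y := by
  have h0 : 0 < n := x.pos
  -- product of consecutive steps agrees
  have hprod : ∀ i : ℕ, 1 ≤ i → i + 1 < n →
      stepD g (i - 1) * stepD g i = stepD f (i - 1) * stepD f i := by
    intro i h1 h2
    have hiff : (stepD f (i - 1) + stepD f i = 0) ↔ (stepD g (i - 1) + stepD g i = 0) := by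
      rw [← stepD_inv_iff hf h1 h2, ← stepD_inv_iff hg h1 h2, hinv]
    rcases stepD_pm hf (i - 1) with ha | ha <;> rcases stepD_pm hf i with hb | hb <;>
      rcases stepD_pm hg (i - 1) with hc | hc <;> rcases stepD_pm hg i with hd | hd <;>
        rw [ha, hb, hc, hd] at hiff ⊢ <;> norm_num at hiff <;> norm_num
  set ε : ℤ := stepD g 0 * stepD f 0 with hε
  have hstep : ∀ i : ℕ, i + 1 < n → stepD g i = ε * stepD f i := by
    intro i
    induction i with
    | zero =>
      intro h
      rcases stepD_pm hf 0 with h0' | h0' <;> rw [hε, h0'] <;> ring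
    | succ i ih =>
      intro h
      have h' : i + 1 < n := by omega
      have hp := hprod (i + 1) (by omega) h
      simp only [Nat.add_sub_cancel] at hp
      have hih := ih h'
      rcases stepD_pm hf i with h1' | h1' <;> rcases stepD_pm hg i with h2' | h2' <;>
        rw [h1', h2'] at hp hih <;>
        [skip; skip; skip; skip] <;>
        (first
          | (have hε1 : ε = 1 := by linarith
             rw [hε1]; linarith)
          | (have hε1 : ε = -1 := by linarith
             rw [hε1]; linarith))
  -- telescoping
  have htel : ∀ i : ℕ, ∀ h : i < n,
      ((g ⟨i, h⟩).val : ℤ) - ((g ⟨0, h0⟩).val : ℤ)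
        = ε * (((f ⟨i, h⟩).val : ℤ) - ((f ⟨0, h0⟩).val : ℤ)) := by
    intro i
    induction i with
    | zero =>
      intro h
      have : (⟨0, h⟩ : Fin n) = ⟨0, h0⟩ := rfl
      rw [this]; ring
    | succ i ih =>
      intro h
      have h' : i < n := Nat.lt_of_succ_lt h
      have ihi := ih h'
      have hsg : stepD g i = ((g ⟨i + 1, h⟩).val : ℤ) - ((g ⟨i, h'⟩).val : ℤ) := dif_pos h
      have hsf : stepD f i = ((f ⟨i + 1, h⟩).val : ℤ) - ((f ⟨i, h'⟩).val : ℤ) := dif_pos h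
      have hst := hstep i h
      rw [hsg, hsf] at hst
      linear_combination hst + ihi
  have hx := htel x.1 x.2
  have hy := htel y.1 y.2
  have hfe' : ((f x).val : ℤ) = ((f y).val : ℤ) := by exact_mod_cast congrArg Fin.val hfe
  have hx' : ((g x).val : ℤ) - ((g ⟨0, h0⟩).val : ℤ)
      = ε * (((f x).val : ℤ) - ((f ⟨0, h0⟩).val : ℤ)) := hx
  have hy' : ((g y).val : ℤ) - ((g ⟨0, h0⟩).val : ℤ)
      = ε * (((f y).val : ℤ) - ((f ⟨0, h0⟩).val : ℤ)) := hy
  have : ((g x).val : ℤ) = ((g y).val : ℤ) := by rw [hfe'] at hx'; omega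
  apply Fin.val_injective
  exact_mod_cast this

/-- For `α, β ∈ End P_n`: `ker α = ker β` if and only if `Inv α = Inv β`. -/
theorem End_path_ker_eq_iff_inv_eq (n : ℕ) (f g : Function.End (Fin n))
    (hf : IsEndo f) (hg : IsEndo g) :
    (∀ x y : Fin n, f x = f y ↔ g x = g y) ↔ InvSet f = InvSet g := by
  constructor
  · intro hker
    ext i
    simp only [InvSet, Set.mem_setOf_eq]
    constructor
    · rintro ⟨h1, h2, heq, -⟩
      exact ⟨h1, h2, (hker _ _).mp heq, endo_ne hg i h2 _⟩
    · rintro ⟨h1, h2, heq, -⟩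
      exact ⟨h1, h2, (hker _ _).mpr heq, endo_ne hf i h2 _⟩
  · intro hinv x y
    exact ⟨key f g hf hg hinv, key g f hg hf hinv.symm⟩
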